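/- Spectral representation of the connecting form of the finite system: let N ≥ 1 and (b_1,…,b_N) ∈ ℝ^N, and assume (λ_k)_{k=1}^N are eigenvalues of H_N with eigenvectors (φ^k)_{k=1}^N satisfying H_N φ^k = λ_k φ^k and φ^k_1 = 1, such that (φ^1,…,φ^N) is an orthogonal basis of ℝ^N, and set ρ_k := ⟨φ^k, φ^k⟩. Then for every T ≥ 1 and all controls f, g : ℕ → ℝ with f_t = g_t = 0 for t ≥ T: Σ_{n=1}^N v^f_{n,T} v^g_{n,T} = Σ_{k=1}^N (1/ρ_k) (Σ_{l=0}^{T−1} T_{T−l}(λ_k) f_l) (Σ_{m=0}^{T−1} T_{T−m}(λ_k) g_m). -/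

import Mathlib

/-- `solFin N b f t n` is the solution `v^f_{n,t}` of the finite discrete Schrödinger system
with Dirichlet condition at `n = N+1`:
`v_{n,t+1} + v_{n,t-1} - v_{n+1,t} - v_{n-1,t} + b_n v_{n,t} = 0` for `1 ≤ n ≤ N`, `t ≥ 0`,
`v_{n,-1} = v_{n,0} = 0`, `v_{0,t} = f_t`, `v_{N+1,t} = 0`
(the first argument after `b f` is the time `t`, the last the space variable `n`). -/
noncomputable def solFin (N : ℕ) (b f : ℕ → ℝ) : ℕ → ℕ → ℝ
  | 0, n => if n = 0 then f 0 else 0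
  | 1, n => if n = 0 then f 1 else if n = N + 1 then 0 else
      solFin N b f 0 (n + 1) + solFin N b f 0 (n - 1) - b n * solFin N b f 0 n
  | (t + 2), n => if n = 0 then f (t + 2) else if n = N + 1 then 0 else
      solFin N b f (t + 1) (n + 1) + solFin N b f (t + 1) (n - 1) - b n * solFin N b f (t + 1) n
        - solFin N b f t n

/-- `cheb lam t` is the polynomial sequence `T_t(λ)` with `T_0 = 0`, `T_1 = 1`,
`T_{t+1}(λ) = λ T_t(λ) - T_{t-1}(λ)` (so `T_t(2x) = U_{t-1}(x)`, Chebyshev of the 2nd kind). -/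
noncomputable def cheb (lam : ℝ) : ℕ → ℝ
  | 0 => 0
  | 1 => 1
  | (t + 2) => lam * cheb lam (t + 1) - cheb lam t

/-- The `N × N` symmetric Jacobi matrix `H_N` with diagonal `-b_i` and off-diagonal `1`. -/
noncomputable def jacobiH (N : ℕ) (b : ℕ → ℝ) : Matrix (Fin N) (Fin N) ℝ :=
  Matrix.of fun i j =>
    if (i : ℕ) = (j : ℕ) then -b ((i : ℕ) + 1)
    else if (i : ℕ) + 1 = (j : ℕ) ∨ (j : ℕ) + 1 = (i : ℕ) then 1 else 0

lemma solFin_boundary (N : ℕ) (b f : ℕ → ℝ) : ∀ t, solFin N b f t (N + 1) = 0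
  | 0 => by simp [solFin]
  | 1 => by simp [solFin]
  | (t + 2) => by simp [solFin]

lemma solFin_zero_time (N : ℕ) (b f : ℕ → ℝ) (n : ℕ) (hn : n ≠ 0) :
    solFin N b f 0 n = 0 := by simp [solFin, hn]

lemma solFin_at_zero (N : ℕ) (b f : ℕ → ℝ) : ∀ t, solFin N b f t 0 = f t
  | 0 => by simp [solFin]
  | 1 => by simp [solFin]
  | (t + 2) => by simp [solFin]

/-- extended eigenvector -/
noncomputable def extVec (N : ℕ) (phiv : Fin N → ℝ) (n : ℕ) : ℝ :=
  if h : n - 1 < N ∧ n ≠ 0 then phiv ⟨n - 1, h.1⟩ else 0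

lemma extVec_zero (N : ℕ) (phiv : Fin N → ℝ) : extVec N phiv 0 = 0 := by
  simp [extVec]

lemma extVec_top (N : ℕ) (phiv : Fin N → ℝ) : extVec N phiv (N + 1) = 0 := by
  simp [extVec]

lemma extVec_succ (N : ℕ) (phiv : Fin N → ℝ) (i : ℕ) (h : i < N) :
    extVec N phiv (i + 1) = phiv ⟨i, h⟩ := by
  simp [extVec, h]

lemma extVec_sum (N : ℕ) (phiv : Fin N → ℝ) (m : ℕ) :
    extVec N phiv m = ∑ j : Fin N, if (j : ℕ) + 1 = m then phiv j else 0 := by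
  rcases m with _ | i
  · simp [extVec_zero]
  · by_cases h : i < N
    · rw [extVec_succ N phiv i h]
      rw [Finset.sum_congr rfl (g := fun j => if j = (⟨i, h⟩ : Fin N) then phiv j else 0)
        (fun j _ => if_congr (by rw [Fin.ext_iff]; simp) rfl rfl)]
      rw [Finset.sum_ite_eq']
      simp
    · rw [show extVec N phiv (i+1) = 0 from dif_neg (by omega)]
      symm
      exact Finset.sum_eq_zero fun j _ => if_neg (by have := j.isLt; omega)

lemma extVec_rec (N : ℕ) (b : ℕ → ℝ) (lam : ℝ) (phiv : Fin N → ℝ)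
    (heig : (jacobiH N b).mulVec phiv = lam • phiv) (i : ℕ) (hi : i < N) :
    extVec N phiv i + extVec N phiv (i + 2) - b (i + 1) * extVec N phiv (i + 1)
      = lam * extVec N phiv (i + 1) := by
  have h1 := congrFun heig ⟨i, hi⟩
  simp only [Matrix.mulVec, dotProduct, Pi.smul_apply, smul_eq_mul] at h1
  rw [extVec_sum, extVec_sum, extVec_sum, Finset.mul_sum, ← Finset.sum_add_distrib,
    ← Finset.sum_sub_distrib]
  conv_rhs => rw [← extVec_sum, extVec_succ N phiv i hi]
  rw [← h1]
  refine Finset.sum_congr rfl (fun j _ => ?_)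
  have hj := j.isLt
  simp only [jacobiH, Matrix.of_apply]
  split_ifs <;> first | ring1 | (exfalso; omega)

lemma solFin_one_eval (N : ℕ) (b f : ℕ → ℝ) (i : ℕ) (hi : i < N) :
    solFin N b f 1 (i + 1) = if i = 0 then f 0 else 0 := by
  have h1 : ¬ (i + 1 = N + 1) := by omega
  simp [solFin, h1, hi.ne]

lemma solFin_step (N : ℕ) (b f : ℕ → ℝ) (t i : ℕ) (hi : i < N) :
    solFin N b f (t + 2) (i + 1) = solFin N b f (t + 1) (i + 2) + solFin N b f (t + 1) i
      - b (i + 1) * solFin N b f (t + 1) (i + 1) - solFin N b f t (i + 1) := by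
  simp only [solFin]
  rw [if_neg (by omega : ¬ (i + 1 = 0)), if_neg (by omega : ¬ (i + 1 = N + 1))]
  simp [Nat.add_sub_cancel]

lemma w_rec (N : ℕ) (hN : 1 ≤ N) (b : ℕ → ℝ) (lam : ℝ) (phiv : Fin N → ℝ)
    (heig : (jacobiH N b).mulVec phiv = lam • phiv) (hfirst : phiv ⟨0, hN⟩ = 1)
    (f : ℕ → ℝ) (t : ℕ) :
    (∑ i ∈ Finset.range N, extVec N phiv (i + 1) * solFin N b f (t + 2) (i + 1))
      = lam * (∑ i ∈ Finset.range N, extVec N phiv (i + 1) * solFin N b f (t + 1) (i + 1))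
        - (∑ i ∈ Finset.range N, extVec N phiv (i + 1) * solFin N b f t (i + 1)) + f (t + 1) := by
  set v := solFin N b f (t + 1) with hv
  have hPhi1 : extVec N phiv 1 = 1 := by
    have := extVec_succ N phiv 0 hN
    simpa [hfirst] using this
  have h1 : ∀ i ∈ Finset.range N, extVec N phiv (i + 1) * solFin N b f (t + 2) (i + 1)
      = extVec N phiv (i + 1) * v (i + 2) + extVec N phiv (i + 1) * v i
        - b (i + 1) * (extVec N phiv (i + 1) * v (i + 1))
        - extVec N phiv (i + 1) * solFin N b f t (i + 1) := by
    intro i hi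
    rw [solFin_step N b f t i (Finset.mem_range.mp hi)]
    ring
  rw [Finset.sum_congr rfl h1, Finset.sum_sub_distrib, Finset.sum_sub_distrib,
    Finset.sum_add_distrib]
  have hA : ∑ i ∈ Finset.range N, extVec N phiv (i + 1) * v (i + 2)
      = ∑ i ∈ Finset.range N, extVec N phiv i * v (i + 1) := by
    have e1 : (∑ i ∈ Finset.range N, extVec N phiv (i + 1) * v (i + 1 + 1))
        + extVec N phiv 0 * v (0 + 1)
        = (∑ i ∈ Finset.range N, extVec N phiv i * v (i + 1)) + extVec N phiv N * v (N + 1) := by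
      rw [← Finset.sum_range_succ' (fun i => extVec N phiv i * v (i + 1)) N,
        Finset.sum_range_succ (fun i => extVec N phiv i * v (i + 1)) N]
    rw [extVec_zero] at e1
    rw [show v (N + 1) = 0 from solFin_boundary N b f (t + 1)] at e1
    simpa using e1
  have hB : ∑ i ∈ Finset.range N, extVec N phiv (i + 1) * v i
      = (∑ i ∈ Finset.range N, extVec N phiv (i + 2) * v (i + 1)) + f (t + 1) := by
    have e2 : (∑ i ∈ Finset.range N, extVec N phiv (i + 1 + 1) * v (i + 1))
        + extVec N phiv (0 + 1) * v 0
        = (∑ i ∈ Finset.range N, extVec N phiv (i + 1) * v i) + extVec N phiv (N + 1) * v N := by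
      rw [← Finset.sum_range_succ' (fun i => extVec N phiv (i + 1) * v i) N,
        Finset.sum_range_succ (fun i => extVec N phiv (i + 1) * v i) N]
    rw [extVec_top] at e2
    have hv0 : v 0 = f (t + 1) := solFin_at_zero N b f (t + 1)
    rw [hv0] at e2
    simp only [zero_mul, add_zero, Nat.zero_add, hPhi1, one_mul] at e2
    linarith [e2]
  rw [hA, hB]
  have key : ∀ i ∈ Finset.range N,
      extVec N phiv i * v (i + 1) + extVec N phiv (i + 2) * v (i + 1)
        - b (i + 1) * (extVec N phiv (i + 1) * v (i + 1))
      = lam * (extVec N phiv (i + 1) * v (i + 1)) := by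
    intro i hi
    have h := extVec_rec N b lam phiv heig i (Finset.mem_range.mp hi)
    linear_combination v (i + 1) * h
  have hsum : (∑ i ∈ Finset.range N, extVec N phiv i * v (i + 1))
      + (∑ i ∈ Finset.range N, extVec N phiv (i + 2) * v (i + 1))
      - (∑ i ∈ Finset.range N, b (i + 1) * (extVec N phiv (i + 1) * v (i + 1)))
      = lam * ∑ i ∈ Finset.range N, extVec N phiv (i + 1) * v (i + 1) := by
    rw [← Finset.sum_add_distrib, ← Finset.sum_sub_distrib, Finset.mul_sum]
    exact Finset.sum_congr rfl key
  linarith [hsum]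

lemma w_formula (N : ℕ) (hN : 1 ≤ N) (b : ℕ → ℝ) (lam : ℝ) (phiv : Fin N → ℝ)
    (heig : (jacobiH N b).mulVec phiv = lam • phiv) (hfirst : phiv ⟨0, hN⟩ = 1)
    (f : ℕ → ℝ) (t : ℕ) :
    ∑ i ∈ Finset.range N, extVec N phiv (i + 1) * solFin N b f t (i + 1)
      = ∑ l ∈ Finset.range t, cheb lam (t - l) * f l := by
  set W : ℕ → ℝ := fun s => ∑ i ∈ Finset.range N, extVec N phiv (i + 1) * solFin N b f s (i + 1)
    with hW
  set R : ℕ → ℝ := fun s => ∑ l ∈ Finset.range s, cheb lam (s - l) * f l with hR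
  have hPhi1 : extVec N phiv 1 = 1 := by
    have := extVec_succ N phiv 0 hN
    simpa [hfirst] using this
  have hW0 : W 0 = 0 := Finset.sum_eq_zero fun i _ => by
    rw [solFin_zero_time N b f (i + 1) (by omega), mul_zero]
  have hW1 : W 1 = f 0 := by
    have : W 1 = ∑ i ∈ Finset.range N, if i = 0 then extVec N phiv (i + 1) * f 0 else 0 := by
      refine Finset.sum_congr rfl fun i hi => ?_
      rw [solFin_one_eval N b f i (Finset.mem_range.mp hi)]
      split_ifs <;> simp
    rw [this, Finset.sum_ite_eq' (Finset.range N) 0 (fun i => extVec N phiv (i + 1) * f 0)]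
    simp [Finset.mem_range, hN, hPhi1]
    intro h; omega
  have hRstep : ∀ s : ℕ, lam * R (s + 1) - R s + f (s + 1) = R (s + 2) := by
    intro s
    have h2 : R (s + 2) = (∑ l ∈ Finset.range (s + 1), cheb lam (s + 2 - l) * f l)
        + cheb lam 1 * f (s + 1) := by
      rw [hR]
      simp only
      rw [Finset.sum_range_succ, show s + 2 - (s + 1) = 1 by omega]
    have h3 : ∀ l ∈ Finset.range (s + 1), cheb lam (s + 2 - l) * f l
        = lam * (cheb lam (s + 1 - l) * f l) - cheb lam (s - l) * f l := by
      intro l hl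
      have hl' : l ≤ s := by simpa [Nat.lt_succ_iff] using hl
      rw [show s + 2 - l = (s - l) + 2 by omega, show s + 1 - l = (s - l) + 1 by omega]
      show (lam * cheb lam ((s - l) + 1) - cheb lam (s - l)) * f l = _
      ring
    have h4 : ∑ l ∈ Finset.range (s + 1), cheb lam (s - l) * f l = R s := by
      rw [hR, Finset.sum_range_succ]
      simp [cheb]
    rw [h2, Finset.sum_congr rfl h3, Finset.sum_sub_distrib, ← Finset.mul_sum, h4]
    have : cheb lam 1 = 1 := rfl
    rw [this]
    ring
  have main : ∀ s : ℕ, W s = R s ∧ W (s + 1) = R (s + 1) := by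
    intro s
    induction s with
    | zero =>
      constructor
      · rw [hW0]; simp [hR]
      · rw [hW1]; rw [hR]; simp [cheb]
    | succ n ih =>
      refine ⟨ih.2, ?_⟩
      have := w_rec N hN b lam phiv heig hfirst f n
      have hw2 : W (n + 2) = lam * W (n + 1) - W n + f (n + 1) := this
      rw [hw2, ih.1, ih.2, hRstep n]
  exact (main t).1

lemma dot_expand (N : ℕ) (hN : 1 ≤ N) (phi : Fin N → (Fin N → ℝ))
    (hfirst : ∀ k, phi k ⟨0, hN⟩ = 1)
    (horth : ∀ k l, k ≠ l → dotProduct (phi k) (phi l) = 0)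
    (rho : Fin N → ℝ) (hrho : ∀ k, rho k = dotProduct (phi k) (phi k))
    (u w : Fin N → ℝ) :
    dotProduct u w
      = ∑ k, (1 / rho k) * dotProduct (phi k) u * dotProduct (phi k) w := by
  have hrho_ne : ∀ k, rho k ≠ 0 := by
    intro k hk
    rw [hrho k] at hk
    have h0 : phi k = 0 := dotProduct_self_eq_zero.mp hk
    have := hfirst k
    rw [h0] at this
    simpa using this
  set P : Matrix (Fin N) (Fin N) ℝ := Matrix.of (fun k i => phi k i) with hP
  set Q : Matrix (Fin N) (Fin N) ℝ := Matrix.of (fun i k => phi k i / rho k) with hQ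
  have hPQ : P * Q = 1 := by
    ext k l
    rw [Matrix.mul_apply, Matrix.one_apply]
    have : ∀ i, P k i * Q i l = phi k i * phi l i / rho l := fun i => by
      simp [hP, hQ, mul_div_assoc]
    rw [Finset.sum_congr rfl (fun i _ => this i), ← Finset.sum_div]
    by_cases hkl : k = l
    · subst hkl
      rw [if_pos rfl, div_eq_one_iff_eq (hrho_ne k), hrho k]
      rfl
    · rw [if_neg hkl]
      have := horth k l hkl
      simp only [dotProduct] at this
      rw [this, zero_div]
  have hQP : Q * P = 1 := mul_eq_one_comm.mp hPQ
  have h1 : dotProduct u w = dotProduct u ((Q * P).mulVec w) := by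
    rw [hQP, Matrix.one_mulVec]
  rw [h1, ← Matrix.mulVec_mulVec, Matrix.dotProduct_mulVec]
  show ∑ k, (Matrix.vecMul u Q) k * (P.mulVec w) k = _
  refine Finset.sum_congr rfl fun k _ => ?_
  have h2 : Matrix.vecMul u Q k = dotProduct (phi k) u / rho k := by
    simp only [Matrix.vecMul, dotProduct, hQ, Matrix.of_apply]
    rw [Finset.sum_div]
    exact Finset.sum_congr rfl fun i _ => by ring
  have h3 : P.mulVec w k = dotProduct (phi k) w := rfl
  rw [h2, h3]
  field_simp


/-- Spectral representation of the connecting form of the finite system. -/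
theorem spectral_connecting_form (N : ℕ) (hN : 1 ≤ N) (b : ℕ → ℝ)
    (lam : Fin N → ℝ) (phi : Fin N → (Fin N → ℝ))
    (heig : ∀ k, (jacobiH N b).mulVec (phi k) = lam k • phi k)
    (hfirst : ∀ k, phi k ⟨0, hN⟩ = 1)
    (horth : ∀ k l, k ≠ l → dotProduct (phi k) (phi l) = 0)
    (rho : Fin N → ℝ) (hrho : ∀ k, rho k = dotProduct (phi k) (phi k)) :
    ∀ T : ℕ, 1 ≤ T → ∀ f g : ℕ → ℝ,
      (∀ t, T ≤ t → f t = 0) → (∀ t, T ≤ t → g t = 0) →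
      ∑ n ∈ Finset.Icc 1 N, solFin N b f T n * solFin N b g T n =
        ∑ k, (1 / rho k) *
          (∑ l ∈ Finset.range T, cheb (lam k) (T - l) * f l) *
          (∑ m ∈ Finset.range T, cheb (lam k) (T - m) * g m) := by
  intro T hT f g hf hg
  have hdot : ∀ (k : Fin N) (h : ℕ → ℝ),
      dotProduct (phi k) (fun j : Fin N => solFin N b h T ((j : ℕ) + 1))
        = ∑ l ∈ Finset.range T, cheb (lam k) (T - l) * h l := by
    intro k h
    have h2 := Fin.sum_univ_eq_sum_range
      (fun i => extVec N (phi k) (i + 1) * solFin N b h T (i + 1)) N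
    have h1 : dotProduct (phi k) (fun j : Fin N => solFin N b h T ((j : ℕ) + 1))
        = ∑ i ∈ Finset.range N, extVec N (phi k) (i + 1) * solFin N b h T (i + 1) := by
      rw [← h2]
      refine Finset.sum_congr rfl fun j _ => ?_
      rw [extVec_succ N (phi k) (j : ℕ) j.isLt]
    rw [h1, w_formula N hN b (lam k) (phi k) (heig k) (hfirst k) h T]
  have hIcc : ∑ n ∈ Finset.Icc 1 N, solFin N b f T n * solFin N b g T n
      = ∑ i ∈ Finset.range N, solFin N b f T (1 + i) * solFin N b g T (1 + i) := by
    rw [← Finset.Ico_add_one_right_eq_Icc, Finset.sum_Ico_eq_sum_range]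
    norm_num
  have hL : ∑ i ∈ Finset.range N, solFin N b f T (1 + i) * solFin N b g T (1 + i)
      = dotProduct (fun j : Fin N => solFin N b f T ((j : ℕ) + 1))
          (fun j : Fin N => solFin N b g T ((j : ℕ) + 1)) := by
    have h3 := Fin.sum_univ_eq_sum_range
      (fun i => solFin N b f T (i + 1) * solFin N b g T (i + 1)) N
    rw [show dotProduct (fun j : Fin N => solFin N b f T ((j : ℕ) + 1))
          (fun j : Fin N => solFin N b g T ((j : ℕ) + 1))
        = ∑ j : Fin N, solFin N b f T ((j : ℕ) + 1) * solFin N b g T ((j : ℕ) + 1) from rfl,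
      h3]
    exact Finset.sum_congr rfl fun i _ => by rw [Nat.add_comm 1 i]
  rw [hIcc, hL, dot_expand N hN phi hfirst horth rho hrho]
  refine Finset.sum_congr rfl fun k _ => ?_
  rw [hdot k f, hdot k g]
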